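/- Let A be a Banach algebra, I a closed right ideal of A possessing a bounded approximate identity (a bounded net (e_α) in I with e_α x → x for all x ∈ I), and J a closed left ideal of A. Then I + J is a closed subspace of A. -/

import Mathlib

open ContinuousLinearMap Filter Topology

namespace Paper

structure Bimod (A : Type*) [NormedRing A] [NormedAlgebra ℂ A]
    (X : Type*) [NormedAddCommGroup X] [NormedSpace ℂ X] where
  l : A → X →L[ℂ] X
  r : A → X →L[ℂ] X
  l_mul : ∀ a b x, l (a * b) x = l a (l b x)
  r_mul : ∀ a b x, r (a * b) x = r b (r a x)
  lr : ∀ a b x, l a (r b x) = r b (l a x)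

variable {A : Type*} [NormedRing A] [NormedAlgebra ℂ A]
variable {X : Type*} [NormedAddCommGroup X] [NormedSpace ℂ X]

noncomputable def Bimod.dual (M : Bimod A X) : Bimod A (X →L[ℂ] ℂ) where
  l a := (compL ℂ X X ℂ).flip (M.r a)
  r a := (compL ℂ X X ℂ).flip (M.l a)
  l_mul a b f := by ext x; simp [M.r_mul]
  r_mul a b f := by ext x; simp [M.l_mul]
  lr a b f := by ext x; simp [M.lr]

def IsDerivation (M : Bimod A X) (D : A →L[ℂ] X) : Prop :=
  ∀ a b, D (a * b) = M.l a (D b) + M.r b (D a)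

def IsInner (M : Bimod A X) (D : A →L[ℂ] X) : Prop :=
  ∃ x, ∀ a, D a = M.l a x - M.r a x

noncomputable def Bimod.restrict (M : Bimod A X) (Y : Submodule ℂ X)
    (hl : ∀ a, ∀ y ∈ Y, M.l a y ∈ Y) (hr : ∀ a, ∀ y ∈ Y, M.r a y ∈ Y) :
    Bimod A Y where
  l a := ((M.l a).comp Y.subtypeL).codRestrict Y fun y => hl a y y.2
  r a := ((M.r a).comp Y.subtypeL).codRestrict Y fun y => hr a y y.2
  l_mul a b y := Subtype.ext (M.l_mul a b y)
  r_mul a b y := Subtype.ext (M.r_mul a b y)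
  lr a b y := Subtype.ext (M.lr a b y)

noncomputable def algBimod (A : Type*) [NormedRing A] [NormedAlgebra ℂ A] : Bimod A A where
  l a := ContinuousLinearMap.mul ℂ A a
  r a := (ContinuousLinearMap.mul ℂ A).flip a
  l_mul a b x := mul_assoc a b x
  r_mul a b x := (mul_assoc x a b).symm
  lr a b x := (mul_assoc a x b).symm

noncomputable def idealBimod (I : Submodule ℂ A)
    (hL : ∀ a, ∀ x ∈ I, a * x ∈ I) (hR : ∀ a, ∀ x ∈ I, x * a ∈ I) :
    Bimod A I where
  l a := ((ContinuousLinearMap.mul ℂ A a).comp I.subtypeL).codRestrict I fun x => hL a x x.2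
  r a := (((ContinuousLinearMap.mul ℂ A).flip a).comp I.subtypeL).codRestrict I fun x => hR a x x.2
  l_mul a b x := Subtype.ext (mul_assoc a b (x : A))
  r_mul a b x := Subtype.ext (mul_assoc (x : A) a b).symm
  lr a b x := Subtype.ext (mul_assoc a (x : A) b).symm

open Pointwise in
theorem stmt_15
    {A : Type*} [NormedRing A] [NormedAlgebra ℂ A] [CompleteSpace A]
    (I J : Submodule ℂ A)
    (hIc : IsClosed (I : Set A)) (hJc : IsClosed (J : Set A))
    -- $I$ is a right ideal, $J$ a left ideal
    (hIR : ∀ a : A, ∀ x ∈ I, x * a ∈ I) (hJL : ∀ a : A, ∀ x ∈ J, a * x ∈ J)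
    (ι : Type*) (p : Filter ι) [p.NeBot] (e : ι → ↥I)
    (hb : ∃ C : ℝ, ∀ i, ‖e i‖ ≤ C)
    (hai : ∀ x : ↥I, Tendsto (fun i => (e i : A) * (x : A)) p (𝓝 (x : A))) :
    IsClosed ((I : Set A) + (J : Set A)) := by
  obtain ⟨C0, hC0⟩ := hb
  set C : ℝ := max C0 0 with hCdef
  have hCnn : (0:ℝ) ≤ C := le_max_right _ _
  have hbC : ∀ i, ‖(e i : A)‖ ≤ C := fun i => le_trans (hC0 i) (le_max_left _ _)
  set S : Set A := (I : Set A) + (J : Set A) with hSdef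
  have hcl : closure S = ((I ⊔ J).topologicalClosure : Set A) := by
    rw [Submodule.topologicalClosure_coe, Submodule.coe_sup]
  -- key approximation lemma
  have key : ∀ z', z' ∈ closure S → ∀ δ, 0 < δ →
      ∃ u' w' : A, u' ∈ I ∧ w' ∈ J ∧ ‖z' - (u' + w')‖ ≤ δ ∧ ‖u'‖ ≤ C * ‖z'‖ ∧
        ‖w'‖ ≤ (1 + C) * ‖z'‖ + δ := by
    intro z' hz' δ hδ
    have h2C : (0:ℝ) < 2 + C := by linarith
    set ε : ℝ := δ / (2 + C) with hεdef
    have hεpos : 0 < ε := div_pos hδ h2C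
    obtain ⟨q, hqS, hq⟩ := Metric.mem_closure_iff.mp hz' ε hεpos
    obtain ⟨y, hyI, w0, hw0J, hqeq⟩ := hqS
    have hyw : ‖z' - (y + w0)‖ < ε := by
      have : y + w0 = q := hqeq
      rw [← dist_eq_norm, this]; exact hq
    obtain ⟨i, hi⟩ : ∃ i, ‖(e i : A) * y - y‖ < ε := by
      have ht := hai ⟨y, hyI⟩
      have hev : ∀ᶠ i in p, dist ((e i : A) * y) y < ε :=
        Metric.tendsto_nhds.mp ht ε hεpos
      simpa [dist_eq_norm] using hev.exists
    refine ⟨(e i : A) * z', w0 - (e i : A) * w0, hIR z' _ (e i).2,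
      J.sub_mem hw0J (hJL _ _ hw0J), ?_, ?_, ?_⟩
    · have hid : z' - ((e i : A) * z' + (w0 - (e i : A) * w0)) =
          (z' - (y + w0)) - (e i : A) * (z' - (y + w0)) + (y - (e i : A) * y) := by
        simp only [mul_sub, mul_add]; abel
      rw [hid]
      have h1 : ‖(e i : A) * (z' - (y + w0))‖ ≤ C * ε := by
        calc ‖(e i : A) * (z' - (y + w0))‖ ≤ ‖(e i : A)‖ * ‖z' - (y + w0)‖ := norm_mul_le _ _
          _ ≤ C * ε := mul_le_mul (hbC i) hyw.le (norm_nonneg _) hCnn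
      have h2 : ‖y - (e i : A) * y‖ < ε := by rwa [norm_sub_rev]
      calc ‖(z' - (y + w0)) - (e i : A) * (z' - (y + w0)) + (y - (e i : A) * y)‖
          ≤ ‖(z' - (y + w0)) - (e i : A) * (z' - (y + w0))‖ + ‖y - (e i : A) * y‖ :=
            norm_add_le _ _
        _ ≤ (‖z' - (y + w0)‖ + ‖(e i : A) * (z' - (y + w0))‖) + ‖y - (e i : A) * y‖ := by
            gcongr; exact norm_sub_le _ _
        _ ≤ (ε + C * ε) + ε := by
            have := hyw.le; have := h2.le; gcongr
        _ = (2 + C) * ε := by ring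
        _ = δ := by rw [hεdef]; field_simp
    · calc ‖(e i : A) * z'‖ ≤ ‖(e i : A)‖ * ‖z'‖ := norm_mul_le _ _
        _ ≤ C * ‖z'‖ := mul_le_mul_of_nonneg_right (hbC i) (norm_nonneg _)
    · -- ‖w0 - e i * w0‖ ≤ (1+C)‖z'‖ + δ
      have hw_eq : w0 - (e i : A) * w0 =
          (z' - (e i : A) * z') - (z' - ((e i : A) * z' + (w0 - (e i : A) * w0))) := by
        abel
      have herr : ‖z' - ((e i : A) * z' + (w0 - (e i : A) * w0))‖ ≤ δ := by
        have hid : z' - ((e i : A) * z' + (w0 - (e i : A) * w0)) =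
            (z' - (y + w0)) - (e i : A) * (z' - (y + w0)) + (y - (e i : A) * y) := by
          simp only [mul_sub, mul_add]; abel
        rw [hid]
        have h1 : ‖(e i : A) * (z' - (y + w0))‖ ≤ C * ε := by
          calc ‖(e i : A) * (z' - (y + w0))‖ ≤ ‖(e i : A)‖ * ‖z' - (y + w0)‖ := norm_mul_le _ _
            _ ≤ C * ε := mul_le_mul (hbC i) hyw.le (norm_nonneg _) hCnn
        have h2 : ‖y - (e i : A) * y‖ < ε := by rwa [norm_sub_rev]
        calc ‖(z' - (y + w0)) - (e i : A) * (z' - (y + w0)) + (y - (e i : A) * y)‖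
            ≤ (‖z' - (y + w0)‖ + ‖(e i : A) * (z' - (y + w0))‖) + ‖y - (e i : A) * y‖ := by
              refine le_trans (norm_add_le _ _) ?_; gcongr; exact norm_sub_le _ _
          _ ≤ (ε + C * ε) + ε := by
              have := hyw.le; have := h2.le; gcongr
          _ = (2 + C) * ε := by ring
          _ = δ := by rw [hεdef]; field_simp
      rw [hw_eq]
      calc ‖(z' - (e i : A) * z') - (z' - ((e i : A) * z' + (w0 - (e i : A) * w0)))‖
          ≤ ‖z' - (e i : A) * z'‖ + ‖z' - ((e i : A) * z' + (w0 - (e i : A) * w0))‖ :=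
            norm_sub_le _ _
        _ ≤ (‖z'‖ + C * ‖z'‖) + δ := by
            gcongr
            refine le_trans (norm_sub_le _ _) ?_
            gcongr
            calc ‖(e i : A) * z'‖ ≤ ‖(e i : A)‖ * ‖z'‖ := norm_mul_le _ _
              _ ≤ C * ‖z'‖ := mul_le_mul_of_nonneg_right (hbC i) (norm_nonneg _)
        _ = (1 + C) * ‖z'‖ + δ := by ring
  -- now the iteration
  refine isClosed_of_closure_subset ?_
  intro z hz
  choose! u w hu hw herr hub hwb using key
  set M : ℝ := ‖z‖ + 1 with hMdef
  have hMpos : (0:ℝ) < M := by positivity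
  set δs : ℕ → ℝ := fun n => (1/2 : ℝ)^(n+1) * M with hδsdef
  have hδpos : ∀ n, 0 < δs n := by intro n; positivity
  set zs : ℕ → A := fun n => Nat.rec z (fun n zn => zn - (u zn (δs n) + w zn (δs n))) n
    with hzsdef
  have hzs_succ : ∀ n, zs (n+1) = zs n - (u (zs n) (δs n) + w (zs n) (δs n)) := fun n => rfl
  have hinv : ∀ n, zs n ∈ closure S ∧ ‖zs n‖ ≤ (1/2 : ℝ)^n * M := by
    intro n
    induction n with
    | zero =>
      refine ⟨hz, ?_⟩
      simp only [pow_zero, one_mul, hMdef]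
      show ‖z‖ ≤ ‖z‖ + 1
      linarith
    | succ n ih =>
      have huI := hu (zs n) ih.1 (δs n) (hδpos n)
      have hwJ := hw (zs n) ih.1 (δs n) (hδpos n)
      have he := herr (zs n) ih.1 (δs n) (hδpos n)
      constructor
      · rw [hzs_succ, hcl]
        have hT : zs n ∈ (I ⊔ J).topologicalClosure := by
          have := ih.1; rwa [hcl] at this
        exact Submodule.sub_mem _ hT
          (Submodule.add_mem _
            ((Submodule.le_topologicalClosure _) (Submodule.mem_sup_left huI))
            ((Submodule.le_topologicalClosure _) (Submodule.mem_sup_right hwJ)))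
      · rw [hzs_succ]
        calc ‖zs n - (u (zs n) (δs n) + w (zs n) (δs n))‖ ≤ δs n := he
          _ = (1/2 : ℝ)^(n+1) * M := rfl
  set un : ℕ → A := fun n => u (zs n) (δs n) with hundef
  set wn : ℕ → A := fun n => w (zs n) (δs n) with hwndef
  have hunI : ∀ n, un n ∈ I := fun n => hu (zs n) (hinv n).1 (δs n) (hδpos n)
  have hwnJ : ∀ n, wn n ∈ J := fun n => hw (zs n) (hinv n).1 (δs n) (hδpos n)
  have hun_norm : ∀ n, ‖un n‖ ≤ (C * M) * (1/2 : ℝ)^n := by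
    intro n
    calc ‖un n‖ ≤ C * ‖zs n‖ := hub (zs n) (hinv n).1 (δs n) (hδpos n)
      _ ≤ C * ((1/2 : ℝ)^n * M) := by
          exact mul_le_mul_of_nonneg_left (hinv n).2 hCnn
      _ = (C * M) * (1/2 : ℝ)^n := by ring
  have hwn_norm : ∀ n, ‖wn n‖ ≤ ((2 + C) * M) * (1/2 : ℝ)^n := by
    intro n
    have h1 : ‖wn n‖ ≤ (1 + C) * ‖zs n‖ + δs n := hwb (zs n) (hinv n).1 (δs n) (hδpos n)
    have h2 : (1 + C) * ‖zs n‖ ≤ (1 + C) * ((1/2 : ℝ)^n * M) :=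
      mul_le_mul_of_nonneg_left (hinv n).2 (by linarith)
    have h3 : δs n ≤ (1/2 : ℝ)^n * M := by
      show (1/2 : ℝ)^(n+1) * M ≤ (1/2 : ℝ)^n * M
      have : (1/2 : ℝ)^(n+1) ≤ (1/2 : ℝ)^n :=
        pow_le_pow_of_le_one (by norm_num) (by norm_num) (Nat.le_succ n)
      exact mul_le_mul_of_nonneg_right this hMpos.le
    calc ‖wn n‖ ≤ (1 + C) * ((1/2 : ℝ)^n * M) + (1/2 : ℝ)^n * M := by linarith
      _ = ((2 + C) * M) * (1/2 : ℝ)^n := by ring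
  have hgeo : Summable (fun n => (1/2 : ℝ)^n) :=
    summable_geometric_of_lt_one (by norm_num) (by norm_num)
  have hun_summable : Summable un :=
    Summable.of_norm_bounded ((hgeo.mul_left (C * M))) hun_norm
  have hwn_summable : Summable wn :=
    Summable.of_norm_bounded ((hgeo.mul_left ((2 + C) * M))) hwn_norm
  obtain ⟨U, hU⟩ := hun_summable
  obtain ⟨W, hW⟩ := hwn_summable
  have hUI : U ∈ I := by
    refine hIc.mem_of_tendsto hU.tendsto_sum_nat (Filter.Eventually.of_forall fun n => ?_)
    exact Submodule.sum_mem I fun k _ => hunI k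
  have hWJ : W ∈ J := by
    refine hJc.mem_of_tendsto hW.tendsto_sum_nat (Filter.Eventually.of_forall fun n => ?_)
    exact Submodule.sum_mem J fun k _ => hwnJ k
  -- telescoping
  have htel : ∀ n, ∑ k ∈ Finset.range n, (un k + wn k) = z - zs n := by
    intro n
    induction n with
    | zero => simp [hzsdef]
    | succ n ih =>
      rw [Finset.sum_range_succ, ih, hzs_succ]
      simp only [hundef, hwndef]
      abel
  have hzs_tendsto : Tendsto zs atTop (𝓝 0) := by
    refine squeeze_zero_norm (fun n => (hinv n).2) ?_
    have : Tendsto (fun n : ℕ => (1/2 : ℝ)^n * M) atTop (𝓝 (0 * M)) :=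
      (tendsto_pow_atTop_nhds_zero_of_lt_one (by norm_num) (by norm_num)).mul_const M
    simpa using this
  have hsum_tendsto : Tendsto (fun n => ∑ k ∈ Finset.range n, (un k + wn k)) atTop (𝓝 z) := by
    simp only [htel]
    have : Tendsto (fun n => z - zs n) atTop (𝓝 (z - 0)) := tendsto_const_nhds.sub hzs_tendsto
    simpa using this
  have hUW : HasSum (fun n => un n + wn n) (U + W) := hU.add hW
  have hzeq : z = U + W := tendsto_nhds_unique hsum_tendsto hUW.tendsto_sum_nat
  exact ⟨U, hUI, W, hWJ, hzeq.symm⟩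

end Paper
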